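/- For any symmetric traceless 2×2 matrices P and Q̄ with |P|² ≤ B²/(2C²), |Q̄|² ≤ B²/(2C²), the quantity -|（P+Q̄)/2|⁴ + (1/2)|P|⁴ + (1/2)|Q̄|⁴ is bounded above by (3B²/(4C²))·|P-Q̄|², where |·| denotes the Frobenius norm and ⟨·,·⟩ the Frobenius inner product. -/
import Mathlib


open scoped RealInnerProductSpace

/-- For p, q ∈ ℝ² with |p|², |q|² ≤ B²/(2C²),
    -|(p+q)/2|⁴ + |p|⁴/2 + |q|⁴/2 ≤ (3B²/(4C²))|p-q|². -/
theorem stmt0 (B C : ℝ) (hB : 0 < B) (hC : 0 < C)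
    (p q : EuclideanSpace ℝ (Fin 2))
    (hp : ‖p‖ ^ 2 ≤ B ^ 2 / (2 * C ^ 2)) (hq : ‖q‖ ^ 2 ≤ B ^ 2 / (2 * C ^ 2)) :
    -‖(2:ℝ)⁻¹ • (p + q)‖ ^ 4 + (1 / 2) * ‖p‖ ^ 4 + (1 / 2) * ‖q‖ ^ 4 ≤
      (3 * B ^ 2 / (4 * C ^ 2)) * ‖p - q‖ ^ 2 := by
  have hC2 : 0 < C ^ 2 := by positivity
  have ht : ⟪p, q⟫ * ⟪p, q⟫ ≤ ⟪p, p⟫ * ⟪q, q⟫ := real_inner_mul_inner_self_le p q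
  rw [real_inner_self_eq_norm_sq, real_inner_self_eq_norm_sq] at ht
  have hpq : ‖p+q‖ ^ 2 = ‖p‖ ^ 2 + 2 * ⟪p, q⟫ + ‖q‖ ^ 2 := norm_add_sq_real p q
  have hmq : ‖p-q‖ ^ 2 = ‖p‖ ^ 2 - 2 * ⟪p, q⟫ + ‖q‖ ^ 2 := norm_sub_sq_real p q
  have hs : ‖(2:ℝ)⁻¹ • (p + q)‖ = 2⁻¹ * ‖p+q‖ := by
    rw [norm_smul]; norm_num
  have h4 : ‖(2:ℝ)⁻¹ • (p + q)‖ ^ 4 = (2⁻¹ : ℝ) ^ 4 * (‖p+q‖ ^ 2) ^ 2 := by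
    rw [hs]; ring
  have hp4 : ‖p‖ ^ 4 = (‖p‖ ^ 2) ^ 2 := by ring
  have hq4 : ‖q‖ ^ 4 = (‖q‖ ^ 2) ^ 2 := by ring
  have hu : (0:ℝ) ≤ ‖p-q‖ ^ 2 := by positivity
  have hp0 : (0:ℝ) ≤ ‖p‖ ^ 2 := by positivity
  have hq0 : (0:ℝ) ≤ ‖q‖ ^ 2 := by positivity
  rw [h4, hp4, hq4, hpq]
  rw [hmq] at hu ⊢
  set a := ‖p‖ ^ 2
  set b := ‖q‖ ^ 2
  set t := ⟪p, q⟫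
  have hM : 0 < B ^ 2 / (2 * C ^ 2) := by positivity
  set M := B ^ 2 / (2 * C ^ 2) with hMdef
  have hR : 3 * B ^ 2 / (4 * C ^ 2) = 3 / 2 * M := by
    rw [hMdef]; field_simp; ring
  rw [hR]
  nlinarith [sq_nonneg (a - b), sq_nonneg (a + b - 2*t),
    mul_nonneg hu hu,
    mul_le_mul_of_nonneg_left hp hu, mul_le_mul_of_nonneg_left hq hu]
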